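/- The number cd_3(n) of 3-core partitions of n with distinct parts satisfies Σ_{n≥0} cd_3(n) q^n = Σ_{n≥1} q^{n²} + Σ_{n≥0} q^{n(n+1)}; i.e., cd_3(n) equals the number of representations of n as a positive perfect square plus the number of representations of n as m(m+1) for m ≥ 0. -/

import Mathlib

/-- The hook length of the box in row i (0-indexed) and column j (1-indexed) of the Young
diagram of the partition (λ_1, ..., λ_ℓ): arm + leg + 1. -/
def hook (l : List ℕ) (i j : ℕ) : ℕ :=
  (l.getD i 0 - j) + ((l.drop (i + 1)).filter (fun p => decide (j ≤ p))).length + 1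

/-- A partition is an s-core if none of its hook lengths equals s. -/
def IsCore (l : List ℕ) (s : ℕ) : Prop :=
  ∀ i j, i < l.length → 1 ≤ j → j ≤ l.getD i 0 → hook l i j ≠ s

/-- The double staircase `[2(k-1)+r, ..., r+2, r]`. -/
def stair (r : ℕ) : ℕ → List ℕ
  | 0 => []
  | k + 1 => (2 * k + r) :: stair r k

lemma stair_length (r k : ℕ) : (stair r k).length = k := by
  induction k with
  | zero => rfl
  | succ k ih => simp [stair, ih]

lemma stair_mem_lt (r k : ℕ) : ∀ p ∈ stair r k, p < 2 * k + r := by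
  induction k with
  | zero => simp [stair]
  | succ k ih =>
    intro p hp
    rcases List.mem_cons.mp hp with h | h
    · omega
    · have := ih p h; omega

lemma stair_pos (r k : ℕ) (hr : 1 ≤ r) : ∀ p ∈ stair r k, 0 < p := by
  induction k with
  | zero => simp [stair]
  | succ k ih =>
    intro p hp
    rcases List.mem_cons.mp hp with h | h
    · omega
    · exact ih p h

lemma stair_sorted (r k : ℕ) : (stair r k).Pairwise (· > ·) := by
  induction k with
  | zero => simp [stair]
  | succ k ih =>
    rw [stair, List.pairwise_cons]
    exact ⟨fun b hb => stair_mem_lt r k b hb, ih⟩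

lemma stair1_sum (k : ℕ) : (stair 1 k).sum = k * k := by
  induction k with
  | zero => rfl
  | succ k ih => simp [stair, ih]; ring

lemma stair2_sum (k : ℕ) : (stair 2 k).sum = k * (k + 1) := by
  induction k with
  | zero => rfl
  | succ k ih => simp [stair, ih]; ring

lemma stair_getD (r : ℕ) : ∀ k i, i < k → (stair r k).getD i 0 = 2 * (k - 1 - i) + r := by
  intro k
  induction k with
  | zero => omega
  | succ k ih =>
    intro i hi
    cases i with
    | zero => simp [stair]
    | succ i =>
      have := ih i (by omega)
      simp only [stair, List.getD_cons_succ, this]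
      congr 1
      omega

lemma stair_drop (r : ℕ) : ∀ k i, (stair r k).drop i = stair r (k - i) := by
  intro k
  induction k with
  | zero => intro i; simp [stair]
  | succ k ih =>
    intro i
    cases i with
    | zero => simp
    | succ i => simpa [stair] using ih i

lemma stair_count (r : ℕ) (hr : r ≤ 2) (j : ℕ) (hj : 1 ≤ j) :
    ∀ m, ((stair r m).filter (fun p => decide (j ≤ p))).length = (2 * m + r - j) / 2 := by
  intro m
  induction m with
  | zero => simp [stair]; omega
  | succ m ih =>
    rw [stair, List.filter_cons]
    rcases le_or_gt j (2 * m + r) with h | h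
    · rw [if_pos (by simpa using h)]
      simp only [List.length_cons, ih]
      omega
    · rw [if_neg (by simpa using h)]
      rw [ih]
      omega

lemma stair_isCore (r : ℕ) (_hr1 : 1 ≤ r) (hr2 : r ≤ 2) (k : ℕ) : IsCore (stair r k) 3 := by
  intro i j hi hj1 hj2
  rw [stair_length] at hi
  unfold hook
  rw [stair_getD r k i hi, stair_drop, stair_count r hr2 j hj1]
  rw [stair_getD r k i hi] at hj2
  have hk : k - (i + 1) = k - 1 - i := by omega
  rw [hk]
  omega

lemma isCore_tail {a : ℕ} {t : List ℕ} (h : IsCore (a :: t) 3) : IsCore t 3 := by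
  intro i j hi hj1 hj2
  have := h (i + 1) j (by simpa using Nat.succ_lt_succ hi) hj1 (by simpa using hj2)
  simpa [hook] using this

lemma filter_nil_of_lt {j : ℕ} {t : List ℕ} (h : ∀ x ∈ t, x < j) :
    t.filter (fun p => decide (j ≤ p)) = [] := by
  rw [List.filter_eq_nil_iff]
  intro x hx
  simpa using Nat.not_le.mpr (h x hx)

lemma classify : ∀ l : List ℕ, l.Pairwise (· > ·) → (∀ p ∈ l, 0 < p) → IsCore l 3 →
    l = stair 1 l.length ∨ l = stair 2 l.length := by
  intro l
  induction l with
  | nil => intro _ _ _; left; rfl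
  | cons a t ih =>
    intro hs hp hc
    have hs' := List.pairwise_cons.mp hs
    have ht := ih hs'.2 (fun p hp' => hp p (List.mem_cons_of_mem _ hp')) (isCore_tail hc)
    have ha1 : 0 < a := hp a List.mem_cons_self
    rcases t with _ | ⟨b, t'⟩
    · -- singleton
      have ha2 : a ≤ 2 := by
        by_contra h
        push_neg at h
        have := hc 0 (a - 2) (by simp) (by omega) (by simp)
        apply this
        simp [hook]
        omega
      interval_cases a
      · left; simp [stair]
      · right; simp [stair]
    · -- a :: b :: t'
      have hab : a > b := hs'.1 b List.mem_cons_self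
      have hb1 : 0 < b := hp b (by simp)
      have htlt : ∀ x ∈ t', x < b := (List.pairwise_cons.mp hs'.2).1
      -- extract shape of t
      have hbody : ∃ r, (r = 1 ∨ r = 2) ∧ b = 2 * t'.length + r ∧ t' = stair r t'.length := by
        rcases ht with ht | ht
        · refine ⟨1, Or.inl rfl, ?_⟩
          rw [List.length_cons, stair] at ht
          exact ⟨(List.cons.injEq _ _ _ _ ▸ ht).1, (List.cons.injEq _ _ _ _ ▸ ht).2⟩
        · refine ⟨2, Or.inr rfl, ?_⟩
          rw [List.length_cons, stair] at ht
          exact ⟨(List.cons.injEq _ _ _ _ ▸ ht).1, (List.cons.injEq _ _ _ _ ▸ ht).2⟩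
      obtain ⟨r, hr, hb, ht'⟩ := hbody
      -- a cannot be b + 1
      have hne1 : a ≠ b + 1 := by
        intro h
        have := hc 0 b (by simp) (by omega) (by simpa using le_of_lt hab)
        apply this
        simp only [hook, List.getD_cons_zero, List.drop_succ_cons, List.drop_zero,
          List.filter_cons, filter_nil_of_lt htlt]
        rw [if_pos (by simp)]
        simp
        omega
      -- a cannot be ≥ b + 3
      have hne3 : a < b + 3 := by
        by_contra h
        push_neg at h
        have := hc 0 (a - 2) (by simp) (by omega) (by simp)
        apply this
        have hnil : (b :: t').filter (fun p => decide (a - 2 ≤ p)) = [] := by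
          apply filter_nil_of_lt
          intro x hx
          rcases List.mem_cons.mp hx with rfl | hx
          · omega
          · have := htlt x hx; omega
        simp only [hook, List.getD_cons_zero, List.drop_succ_cons, List.drop_zero, hnil]
        simp
        omega
      have ha : a = b + 2 := by omega
      have hgoal : a :: b :: t' = stair r (t'.length + 2) := by
        simp only [stair, ← ht', List.cons.injEq]
        refine ⟨by omega, by omega, trivial⟩
      rcases hr with rfl | rfl
      · left; simpa using hgoal
      · right; simpa using hgoal

lemma mem_iff (n : ℕ) (l : List ℕ) :
    (l.Pairwise (· > ·) ∧ (∀ p ∈ l, 0 < p) ∧ IsCore l 3 ∧ l.sum = n) ↔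
      ((∃ m, 1 ≤ m ∧ n = m ^ 2 ∧ l = stair 1 m) ∨ (∃ m, n = m * (m + 1) ∧ l = stair 2 m)) := by
  constructor
  · rintro ⟨hs, hp, hc, hsum⟩
    rcases classify l hs hp hc with h | h
    · rcases Nat.eq_zero_or_pos l.length with h0 | h0
      · right
        refine ⟨0, ?_, ?_⟩
        · rw [← hsum, List.length_eq_zero_iff.mp h0]; rfl
        · rw [List.length_eq_zero_iff.mp h0]; rfl
      · left
        refine ⟨l.length, h0, ?_, h⟩
        rw [← hsum, h, stair1_sum, stair_length, sq]
    · right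
      refine ⟨l.length, ?_, h⟩
      rw [← hsum, h, stair2_sum, stair_length]
  · rintro (⟨m, hm, rfl, rfl⟩ | ⟨m, rfl, rfl⟩)
    · exact ⟨stair_sorted 1 m, stair_pos 1 m le_rfl,
        stair_isCore 1 le_rfl (by norm_num) m, by rw [stair1_sum, sq]⟩
    · exact ⟨stair_sorted 2 m, stair_pos 2 m (by norm_num),
        stair_isCore 2 (by norm_num) le_rfl m, by rw [stair2_sum]⟩

theorem cd_three (n : ℕ) :
    {l : List ℕ | l.Pairwise (· > ·) ∧ (∀ p ∈ l, 0 < p) ∧ IsCore l 3 ∧ l.sum = n}.ncard =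
      {m : ℕ | 1 ≤ m ∧ n = m ^ 2}.ncard + {m : ℕ | n = m * (m + 1)}.ncard := by
  have hset : {l : List ℕ | l.Pairwise (· > ·) ∧ (∀ p ∈ l, 0 < p) ∧ IsCore l 3 ∧ l.sum = n} =
      (fun m => stair 1 m) '' {m : ℕ | 1 ≤ m ∧ n = m ^ 2} ∪
      (fun m => stair 2 m) '' {m : ℕ | n = m * (m + 1)} := by
    ext l
    simp only [Set.mem_setOf_eq, Set.mem_union, Set.mem_image, mem_iff n l]
    constructor
    · rintro (⟨m, h1, h2, h3⟩ | ⟨m, h1, h2⟩)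
      · exact Or.inl ⟨m, ⟨h1, h2⟩, h3.symm⟩
      · exact Or.inr ⟨m, h1, h2.symm⟩
    · rintro (⟨m, ⟨h1, h2⟩, h3⟩ | ⟨m, h1, h2⟩)
      · exact Or.inl ⟨m, h1, h2, h3.symm⟩
      · exact Or.inr ⟨m, h1, h2.symm⟩
  have hA : {m : ℕ | 1 ≤ m ∧ n = m ^ 2}.Subsingleton := by
    rintro a ⟨_, ha⟩ b ⟨_, hb⟩
    exact Nat.pow_left_injective (by norm_num) (ha.symm.trans hb)
  have hB : {m : ℕ | n = m * (m + 1)}.Subsingleton := by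
    rintro a ha b hb
    simp only [Set.mem_setOf_eq] at ha hb
    rcases lt_trichotomy a b with h | h | h
    · nlinarith
    · exact h
    · nlinarith
  rw [hset]
  rcases hA.eq_empty_or_singleton with h1 | ⟨m1, h1⟩ <;>
    rcases hB.eq_empty_or_singleton with h2 | ⟨m2, h2⟩
  · rw [h1, h2]; simp
  · rw [h1, h2]; simp
  · rw [h1, h2]; simp
  · exfalso
    have hm1 : m1 ∈ {m : ℕ | 1 ≤ m ∧ n = m ^ 2} := by rw [h1]; exact rfl
    have hm2 : m2 ∈ {m : ℕ | n = m * (m + 1)} := by rw [h2]; exact rfl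
    obtain ⟨hm1a, hm1b⟩ := hm1
    simp only [Set.mem_setOf_eq] at hm2
    rw [sq] at hm1b
    rcases le_or_gt m1 m2 with h | h
    · nlinarith
    · nlinarith
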